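/- Let X ~ GMM(μ*, π) be a mixture of K spherical unit-variance Gaussians in ℝ^d with centers μ_1*, ..., μ_K* and weights π_1,...,π_K (positive, summing to 1), with 0 < λ < 1/2, and suppose R_min > √((2/(1−2λ)) log θ) where θ = π_max/π_min and R_min = min_{i≠j}‖μ_i*−μ_j*‖. Then for any μ ∈ U_λ (i.e. ‖μ_k − μ_k*‖ ≤ λ R_k for all k, with R_k = min_{j≠k} ‖μ_j*−μ_k*‖) and all j ≠ i: E_{X~N(μ_i*, I_d)}[w_j(X,μ)] ≤ (1 + π_j/π_i) e^{-c(λ) R_{ij}²}, where R_{ij} = ‖μ_i*−μ_j*‖, c(λ) = (1/8)((1−2λ)/(1+2λ))², and w_j(x,μ) = π_j e^{-‖x−μ_j‖²/2} / Σ_k π_k e^{-‖x−μ_k‖²/2}. -/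

import Mathlib

open MeasureTheory Real

/-- Density of the `N(m, I_d)` Gaussian on `ℝ^d`. -/
noncomputable def gaussDensity {d : ℕ} (m x : EuclideanSpace ℝ (Fin d)) : ℝ :=
  (2 * Real.pi) ^ (-(d : ℝ) / 2) * Real.exp (-‖x - m‖ ^ 2 / 2)

/-- EM posterior membership weight of component `j` given candidate centers `μ`. -/
noncomputable def wEM {d K : ℕ} (p : Fin K → ℝ) (μ : Fin K → EuclideanSpace ℝ (Fin d))
    (j : Fin K) (x : EuclideanSpace ℝ (Fin d)) : ℝ :=
  p j * Real.exp (-‖x - μ j‖ ^ 2 / 2) / ∑ k, p k * Real.exp (-‖x - μ k‖ ^ 2 / 2)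

/-- `R_k = min_{j ≠ k} ‖μ_j* - μ_k*‖`. -/
noncomputable def Rsep {d K : ℕ} (μs : Fin K → EuclideanSpace ℝ (Fin d)) (k : Fin K) : ℝ :=
  sInf {r | ∃ j, j ≠ k ∧ r = ‖μs j - μs k‖}

/-- `R_min = min_{i ≠ j} ‖μ_i* - μ_j*‖`. -/
noncomputable def Rmin {d K : ℕ} (μs : Fin K → EuclideanSpace ℝ (Fin d)) : ℝ :=
  sInf {r | ∃ i j, i ≠ j ∧ r = ‖μs i - μs j‖}

/-- `θ = π_max / π_min`. -/
noncomputable def thetaRatio {K : ℕ} (p : Fin K → ℝ) : ℝ :=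
  sSup (Set.range p) / sInf (Set.range p)

/-- The exponent constant `c(λ)`. -/
noncomputable def clam (lam : ℝ) : ℝ := (1 / 8) * ((1 - 2 * lam) / (1 + 2 * lam)) ^ 2

section AuxGauss

open RealInnerProductSpace

variable {d : ℕ}

lemma gaussDensity_nonneg (m x : EuclideanSpace ℝ (Fin d)) : 0 ≤ gaussDensity m x := by
  unfold gaussDensity; positivity

lemma integrable_exp_neg_norm_sq_half :
    Integrable (fun x : EuclideanSpace ℝ (Fin d) => rexp (-‖x‖ ^ 2 / 2)) := by
  have h := (GaussianFourier.integrable_cexp_neg_mul_sq_norm_add (V := EuclideanSpace ℝ (Fin d))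
    (b := (1/2 : ℂ)) (by norm_num) 0 0).norm
  refine h.congr (Filter.Eventually.of_forall fun x => ?_)
  beta_reduce
  rw [Complex.norm_exp]
  congr 1
  simp [Complex.div_re]
  norm_cast
  ring

lemma integrable_gaussDensity (m : EuclideanSpace ℝ (Fin d)) :
    Integrable (gaussDensity m) := by
  unfold gaussDensity
  exact (integrable_exp_neg_norm_sq_half.comp_sub_right m).const_mul _

lemma integral_gaussDensity (m : EuclideanSpace ℝ (Fin d)) :
    ∫ x, gaussDensity m x = 1 := by
  unfold gaussDensity
  rw [integral_const_mul]
  have h1 : (∫ x : EuclideanSpace ℝ (Fin d), rexp (-‖x - m‖ ^ 2 / 2))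
      = ∫ x : EuclideanSpace ℝ (Fin d), rexp (-‖x‖ ^ 2 / 2) :=
    integral_sub_right_eq_self (fun y => rexp (-‖y‖ ^ 2 / 2)) m
  rw [h1]
  have h2 : (∫ x : EuclideanSpace ℝ (Fin d), rexp (-‖x‖ ^ 2 / 2))
      = ∫ x : EuclideanSpace ℝ (Fin d), rexp (-(1/2 : ℝ) * ‖x‖ ^ 2) := by
    congr 1 with x; ring_nf
  rw [h2, GaussianFourier.integral_rexp_neg_mul_sq_norm (by norm_num : (0:ℝ) < 1/2)]
  rw [finrank_euclideanSpace_fin]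
  rw [show (π / (1/2 : ℝ)) = 2 * π by ring]
  rw [← Real.rpow_add (by positivity)]
  rw [show (-(d:ℝ) / 2 + (d:ℝ) / 2) = 0 by ring, Real.rpow_zero]

lemma gauss_complete_sq (mi mj m x : EuclideanSpace ℝ (Fin d)) (α : ℝ) :
    α * ((‖x - mi‖ ^ 2 - ‖x - mj‖ ^ 2) / 2) - ‖x - m‖ ^ 2 / 2
    = (α * ((‖m - mi‖ ^ 2 - ‖m - mj‖ ^ 2) / 2) + α ^ 2 * ‖mj - mi‖ ^ 2 / 2)
      - ‖x - (m + α • (mj - mi))‖ ^ 2 / 2 := by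
  simp only [norm_sub_sq_real, norm_add_sq_real, inner_add_right, inner_sub_right,
    inner_sub_left, inner_add_left, real_inner_smul_right, real_inner_smul_left,
    real_inner_comm x m, real_inner_comm x mi, real_inner_comm x mj, real_inner_comm m mi,
    real_inner_comm m mj, real_inner_comm mi mj, norm_smul, Real.norm_eq_abs, mul_pow, sq_abs]
  ring

end AuxGauss

set_option maxHeartbeats 1000000 in
theorem stmt6 {d K : ℕ} (μs μ : Fin K → EuclideanSpace ℝ (Fin d)) (p : Fin K → ℝ)
    (lam : ℝ) (hl1 : 0 < lam) (hl2 : lam < 1 / 2)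
    (hp : ∀ k, 0 < p k) (hps : ∑ k, p k = 1)
    (hsep : Rmin μs > Real.sqrt ((2 / (1 - 2 * lam)) * Real.log (thetaRatio p)))
    (hU : ∀ k, ‖μ k - μs k‖ ≤ lam * Rsep μs k) :
    ∀ i j, j ≠ i →
      (∫ x, wEM p μ j x * gaussDensity (μs i) x) ≤
        (1 + p j / p i) * Real.exp (-(clam lam) * ‖μs i - μs j‖ ^ 2) := by
  intro i j hji
  have ha : (0:ℝ) < 1 - 2 * lam := by linarith
  have hb : (1:ℝ) < 1 + 2 * lam := by linarith
  set a : ℝ := 1 - 2 * lam with ha_def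
  set b : ℝ := 1 + 2 * lam with hb_def
  set α : ℝ := a / (2 * b ^ 2) with hα_def
  have hα0 : 0 < α := by positivity
  have hα1 : α ≤ 1 := by
    rw [hα_def, div_le_one (by positivity)]
    nlinarith
  set R : ℝ := ‖μs i - μs j‖ with hR_def
  have hRnn : (0:ℝ) ≤ R := norm_nonneg _
  set m : EuclideanSpace ℝ (Fin d) := μs i with hm_def
  set v : EuclideanSpace ℝ (Fin d) := μ j - μ i with hv_def
  set D : ℝ := ‖v‖ with hD_def
  set r : ℝ := p j / p i with hr_def
  have hr0 : 0 < r := div_pos (hp j) (hp i)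
  set Efun : EuclideanSpace ℝ (Fin d) → ℝ :=
    fun x => (‖x - μ i‖ ^ 2 - ‖x - μ j‖ ^ 2) / 2 with hE_def
  set c0 : ℝ := (‖m - μ i‖ ^ 2 - ‖m - μ j‖ ^ 2) / 2 with hc0_def
  set K0 : ℝ := α * c0 + α ^ 2 * D ^ 2 / 2 with hK0_def
  set m' : EuclideanSpace ℝ (Fin d) := m + α • v with hm'_def
  -- basic positivity of the denominator
  have hden : ∀ x : EuclideanSpace ℝ (Fin d),
      0 < ∑ k, p k * rexp (-‖x - μ k‖ ^ 2 / 2) := fun x =>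
    Finset.sum_pos (fun k _ => mul_pos (hp k) (exp_pos _)) ⟨i, Finset.mem_univ i⟩
  have hw_nonneg : ∀ x, 0 ≤ wEM p μ j x := fun x =>
    div_nonneg (mul_nonneg (hp j).le (exp_pos _).le) (hden x).le
  have hw_le_one : ∀ x, wEM p μ j x ≤ 1 := by
    intro x
    rw [wEM, div_le_one (hden x)]
    exact Finset.single_le_sum (f := fun k => p k * rexp (-‖x - μ k‖ ^ 2 / 2))
      (fun k _ => mul_nonneg (hp k).le (exp_pos _).le) (Finset.mem_univ j)
  have hw_le_ratio : ∀ x, wEM p μ j x ≤ r * rexp (Efun x) := by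
    intro x
    have h1 : wEM p μ j x ≤
        (p j * rexp (-‖x - μ j‖ ^ 2 / 2)) / (p i * rexp (-‖x - μ i‖ ^ 2 / 2)) := by
      rw [wEM]
      apply div_le_div_of_nonneg_left (mul_nonneg (hp j).le (exp_pos _).le)
        (mul_pos (hp i) (exp_pos _))
      exact Finset.single_le_sum (f := fun k => p k * rexp (-‖x - μ k‖ ^ 2 / 2))
        (fun k _ => mul_nonneg (hp k).le (exp_pos _).le) (Finset.mem_univ i)
    refine h1.trans_eq ?_
    rw [mul_div_mul_comm, ← Real.exp_sub, hr_def, hE_def]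
    congr 1
    ring
  have hptw : ∀ x, wEM p μ j x ≤ r ^ α * rexp (α * Efun x) := by
    intro x
    have hz : 0 < r * rexp (Efun x) := mul_pos hr0 (exp_pos _)
    have key : wEM p μ j x ≤ (r * rexp (Efun x)) ^ α := by
      rcases le_total (r * rexp (Efun x)) 1 with h | h
      · calc wEM p μ j x ≤ r * rexp (Efun x) := hw_le_ratio x
          _ = (r * rexp (Efun x)) ^ (1:ℝ) := (Real.rpow_one _).symm
          _ ≤ (r * rexp (Efun x)) ^ α := Real.rpow_le_rpow_of_exponent_ge hz h hα1
      · calc wEM p μ j x ≤ 1 := hw_le_one x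
          _ ≤ (r * rexp (Efun x)) ^ α := Real.one_le_rpow h hα0.le
    calc wEM p μ j x ≤ (r * rexp (Efun x)) ^ α := key
      _ = r ^ α * rexp (Efun x) ^ α := Real.mul_rpow hr0.le (exp_nonneg _)
      _ = r ^ α * rexp (α * Efun x) := by rw [← Real.exp_mul, mul_comm (Efun x) α]
  -- the dominating function
  set C1 : ℝ := r ^ α * rexp K0 with hC1_def
  have hbound : ∀ x, wEM p μ j x * gaussDensity m x ≤ C1 * gaussDensity m' x := by
    intro x
    have h1 : wEM p μ j x * gaussDensity m x
        ≤ (r ^ α * rexp (α * Efun x)) * gaussDensity m x :=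
      mul_le_mul_of_nonneg_right (hptw x) (gaussDensity_nonneg m x)
    refine h1.trans_eq ?_
    have hid : α * Efun x - ‖x - m‖ ^ 2 / 2 = K0 - ‖x - m'‖ ^ 2 / 2 := by
      have h := gauss_complete_sq (μ i) (μ j) m x α
      rw [hE_def, hK0_def, hc0_def, hm'_def, hv_def, hD_def]
      exact h
    have hexp : rexp (α * Efun x) * rexp (-‖x - m‖ ^ 2 / 2)
        = rexp K0 * rexp (-‖x - m'‖ ^ 2 / 2) := by
      rw [← Real.exp_add, ← Real.exp_add]
      congr 1
      linarith [hid]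
    unfold gaussDensity
    calc r ^ α * rexp (α * Efun x) * ((2 * π) ^ (-(d:ℝ) / 2) * rexp (-‖x - m‖ ^ 2 / 2))
        = r ^ α * (2 * π) ^ (-(d:ℝ) / 2) * (rexp (α * Efun x) * rexp (-‖x - m‖ ^ 2 / 2)) := by
          ring
      _ = r ^ α * (2 * π) ^ (-(d:ℝ) / 2) * (rexp K0 * rexp (-‖x - m'‖ ^ 2 / 2)) := by
          rw [hexp]
      _ = C1 * ((2 * π) ^ (-(d:ℝ) / 2) * rexp (-‖x - m'‖ ^ 2 / 2)) := by
          rw [hC1_def]; ring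
  have hint : Integrable (fun x => C1 * gaussDensity m' x) :=
    (integrable_gaussDensity m').const_mul _
  have hmono : (∫ x, wEM p μ j x * gaussDensity m x) ≤ ∫ x, C1 * gaussDensity m' x :=
    integral_mono_of_nonneg
      (Filter.Eventually.of_forall fun x =>
        mul_nonneg (hw_nonneg x) (gaussDensity_nonneg m x))
      hint (Filter.Eventually.of_forall hbound)
  rw [integral_const_mul, integral_gaussDensity, mul_one] at hmono
  refine hmono.trans ?_
  -- numeric estimates
  have hbdd : BddBelow {r : ℝ | ∃ j', j' ≠ i ∧ r = ‖μs j' - μs i‖} :=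
    ⟨0, by rintro y ⟨k, hk, rfl⟩; exact norm_nonneg _⟩
  have hbdd' : BddBelow {r : ℝ | ∃ j', j' ≠ j ∧ r = ‖μs j' - μs j‖} :=
    ⟨0, by rintro y ⟨k, hk, rfl⟩; exact norm_nonneg _⟩
  have hRsepi : Rsep μs i ≤ R := by
    apply csInf_le hbdd
    exact ⟨j, hji, by rw [hR_def, norm_sub_rev]⟩
  have hRsepj : Rsep μs j ≤ R := by
    apply csInf_le hbdd'
    exact ⟨i, Ne.symm hji, hR_def⟩
  have hdi : ‖m - μ i‖ ≤ lam * R := by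
    rw [hm_def, norm_sub_rev]
    exact (hU i).trans (mul_le_mul_of_nonneg_left hRsepi hl1.le)
  have hdj : ‖μ j - μs j‖ ≤ lam * R :=
    (hU j).trans (mul_le_mul_of_nonneg_left hRsepj hl1.le)
  have h2 : (1 - lam) * R ≤ ‖m - μ j‖ := by
    have ht : ‖μs i - μs j‖ ≤ ‖μs i - μ j‖ + ‖μ j - μs j‖ :=
      norm_sub_le_norm_sub_add_norm_sub _ _ _
    rw [hm_def]
    rw [hR_def] at *
    linarith
  have hc0 : c0 ≤ -(a / 2) * R ^ 2 := by
    have e1 : ‖m - μ i‖ ^ 2 ≤ (lam * R) ^ 2 :=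
      pow_le_pow_left₀ (norm_nonneg _) hdi 2
    have e2 : ((1 - lam) * R) ^ 2 ≤ ‖m - μ j‖ ^ 2 :=
      pow_le_pow_left₀ (mul_nonneg (by linarith) hRnn) h2 2
    rw [hc0_def, ha_def]
    nlinarith
  have hD : D ≤ b * R := by
    have t1 : ‖μ j - μ i‖ ≤ ‖μ j - μs j‖ + ‖μs j - μ i‖ :=
      norm_sub_le_norm_sub_add_norm_sub _ _ _
    have t2 : ‖μs j - μ i‖ ≤ ‖μs j - μs i‖ + ‖μs i - μ i‖ :=
      norm_sub_le_norm_sub_add_norm_sub _ _ _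
    have t3 : ‖μs j - μs i‖ = R := by rw [hR_def, norm_sub_rev]
    have t4 : ‖μs i - μ i‖ ≤ lam * R := hdi
    rw [hD_def, hv_def, hb_def]
    linarith
  have hD2 : D ^ 2 ≤ (b * R) ^ 2 := pow_le_pow_left₀ (norm_nonneg _) hD 2
  have hK0le : K0 ≤ -(clam lam) * R ^ 2 := by
    have h3 : α * c0 ≤ α * (-(a / 2) * R ^ 2) := mul_le_mul_of_nonneg_left hc0 hα0.le
    have h4 : α ^ 2 * D ^ 2 / 2 ≤ α ^ 2 * (b * R) ^ 2 / 2 := by gcongr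
    have h5 : α * (-(a / 2) * R ^ 2) + α ^ 2 * (b * R) ^ 2 / 2 = -(clam lam) * R ^ 2 := by
      rw [hα_def, clam, ha_def, hb_def]
      have hbne : (1 + 2 * lam) ≠ 0 := by linarith
      field_simp
      ring
    rw [hK0_def]
    linarith
  have hrα : r ^ α ≤ 1 + r := by
    rcases le_total r 1 with h | h
    · have := Real.rpow_le_one hr0.le h hα0.le
      linarith
    · have := Real.rpow_le_rpow_of_exponent_le h hα1
      rw [Real.rpow_one] at this
      linarith
  calc C1 = r ^ α * rexp K0 := hC1_def
    _ ≤ (1 + r) * rexp (-(clam lam) * R ^ 2) := by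
        apply mul_le_mul hrα (Real.exp_le_exp.mpr hK0le) (exp_nonneg _) (by linarith)
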